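/- If (g(x), x·g(x)) is a quasi-involution where g(x) = G(x^2), then (g(x)^2, x·g(x)) is also a quasi-involution; that is, if the inverse of (G(x^2), xG(x^2)) is (G(-x^2), xG(-x^2)), then the inverse of (G(x^2)^2, xG(x^2)) is (G(-x^2)^2, xG(-x^2)). -/

import Mathlib

open PowerSeries

/-- Composition f ∘ g of formal power series (intended for g with zero constant term). -/
noncomputable def comp (f g : ℚ⟦X⟧) : ℚ⟦X⟧ :=
  PowerSeries.mk fun n => ∑ k ∈ Finset.range (n + 1),
    PowerSeries.coeff (R := ℚ) k f * PowerSeries.coeff (R := ℚ) n (g ^ k)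

/-- (f(x) - f(0))/x. -/
noncomputable def shift (f : ℚ⟦X⟧) : ℚ⟦X⟧ := PowerSeries.mk fun n => PowerSeries.coeff (R := ℚ) (n + 1) f

/-- Action of the almost Riordan array (a; g, f) on a power series b. -/
noncomputable def aact (a g f b : ℚ⟦X⟧) : ℚ⟦X⟧ :=
  PowerSeries.C (R := ℚ) (PowerSeries.constantCoeff (R := ℚ) b) * a + PowerSeries.X * g * comp (shift b) f

/-- Product in the group of almost Riordan arrays of order 1 (triples (a; g, f)). -/
noncomputable def amul (M N : ℚ⟦X⟧ × ℚ⟦X⟧ × ℚ⟦X⟧) : ℚ⟦X⟧ × ℚ⟦X⟧ × ℚ⟦X⟧ :=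
  (aact M.1 M.2.1 M.2.2 N.1, M.2.1 * comp N.2.1 M.2.2, comp N.2.2 M.2.2)

/-- Product in the Riordan group (pairs (g, f)). -/
noncomputable def rmul (M N : ℚ⟦X⟧ × ℚ⟦X⟧) : ℚ⟦X⟧ × ℚ⟦X⟧ :=
  (M.1 * comp N.1 M.2, comp N.2 M.2)

section AuxLemmas
open Finset

lemma coeff_pow_eq_zero {f : ℚ⟦X⟧} (hf : PowerSeries.constantCoeff (R := ℚ) f = 0)
    {n k : ℕ} (h : n < k) : PowerSeries.coeff (R := ℚ) n (f ^ k) = 0 := by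
  have hd : (X : ℚ⟦X⟧) ^ k ∣ f ^ k :=
    pow_dvd_pow_of_dvd (PowerSeries.X_dvd_iff.mpr hf) k
  exact PowerSeries.X_pow_dvd_iff.mp hd n h

lemma coeff_comp {f : ℚ⟦X⟧} (hf : PowerSeries.constantCoeff (R := ℚ) f = 0)
    (a : ℚ⟦X⟧) {n N : ℕ} (hN : n ≤ N) :
    PowerSeries.coeff (R := ℚ) n (comp a f) =
      ∑ k ∈ Finset.range (N + 1), PowerSeries.coeff (R := ℚ) k a * PowerSeries.coeff (R := ℚ) n (f ^ k) := by
  rw [comp, PowerSeries.coeff_mk]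
  refine Finset.sum_subset (by intro x hx; simp at hx ⊢; omega) ?_
  intro k hk hk'
  simp only [Finset.mem_range] at hk hk'
  rw [coeff_pow_eq_zero hf (by omega), mul_zero]

lemma comp_mul {f : ℚ⟦X⟧} (hf : PowerSeries.constantCoeff (R := ℚ) f = 0) (a b : ℚ⟦X⟧) :
    comp (a * b) f = comp a f * comp b f := by
  ext n
  set F : ℕ × ℕ → ℚ := fun p =>
    PowerSeries.coeff (R := ℚ) p.1 a * PowerSeries.coeff (R := ℚ) p.2 b
      * PowerSeries.coeff (R := ℚ) n (f ^ (p.1 + p.2)) with hF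
  have hFzero : ∀ p : ℕ × ℕ, n < p.1 + p.2 → F p = 0 := by
    intro p hp
    simp only [hF, coeff_pow_eq_zero hf hp, mul_zero]
  set T' : Finset (ℕ × ℕ) :=
    (Finset.range (n+1) ×ˢ Finset.range (n+1)).filter (fun p => p.1 + p.2 ≤ n) with hT'
  -- LHS equals sum over T'
  have hL : PowerSeries.coeff (R := ℚ) n (comp (a * b) f) = ∑ p ∈ T', F p := by
    rw [coeff_comp hf (a*b) (show n ≤ 2*n by omega)]
    have step1 : ∀ k ∈ Finset.range (2*n+1),
        PowerSeries.coeff (R := ℚ) k (a*b) * PowerSeries.coeff (R := ℚ) n (f ^ k)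
          = ∑ p ∈ Finset.HasAntidiagonal.antidiagonal k, F p := by
      intro k hk
      rw [PowerSeries.coeff_mul, Finset.sum_mul]
      refine Finset.sum_congr rfl fun p hp => ?_
      rw [Finset.HasAntidiagonal.mem_antidiagonal] at hp
      simp [hF, hp]
    rw [Finset.sum_congr rfl step1, ← Finset.sum_biUnion]
    · refine (Finset.sum_subset ?_ ?_).symm
      · intro p hp
        simp only [hT', Finset.mem_filter, Finset.mem_product, Finset.mem_range] at hp
        simp only [Finset.mem_biUnion, Finset.mem_range, Finset.HasAntidiagonal.mem_antidiagonal]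
        exact ⟨p.1 + p.2, by omega, rfl⟩
      · intro p hp hp'
        apply hFzero
        by_contra h
        push_neg at h
        simp only [Finset.mem_biUnion, Finset.mem_range, Finset.HasAntidiagonal.mem_antidiagonal] at hp
        apply hp'
        simp only [hT', Finset.mem_filter, Finset.mem_product, Finset.mem_range]
        omega
    · intro x _ y _ hxy
      simp only [Finset.disjoint_left, Finset.HasAntidiagonal.mem_antidiagonal]
      intro p h1 h2
      exact hxy (h1.symm.trans h2)
  -- RHS equals sum over T'
  have hR : PowerSeries.coeff (R := ℚ) n (comp a f * comp b f) = ∑ p ∈ T', F p := by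
    rw [PowerSeries.coeff_mul]
    have step1 : ∀ q ∈ Finset.HasAntidiagonal.antidiagonal n,
        PowerSeries.coeff (R := ℚ) q.1 (comp a f) * PowerSeries.coeff (R := ℚ) q.2 (comp b f)
          = ∑ i ∈ Finset.range (n+1), ∑ j ∈ Finset.range (n+1),
              PowerSeries.coeff (R := ℚ) i a * PowerSeries.coeff (R := ℚ) j b
                * (PowerSeries.coeff (R := ℚ) q.1 (f ^ i) * PowerSeries.coeff (R := ℚ) q.2 (f ^ j)) := by
      intro q hq
      rw [Finset.HasAntidiagonal.mem_antidiagonal] at hq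
      rw [coeff_comp hf a (show q.1 ≤ n by omega), coeff_comp hf b (show q.2 ≤ n by omega),
        Finset.sum_mul_sum]
      refine Finset.sum_congr rfl fun i _ => Finset.sum_congr rfl fun j _ => by ring
    rw [Finset.sum_congr rfl step1, Finset.sum_comm]
    have step2 : ∀ i ∈ Finset.range (n+1),
        (∑ q ∈ Finset.HasAntidiagonal.antidiagonal n, ∑ j ∈ Finset.range (n+1),
          PowerSeries.coeff (R := ℚ) i a * PowerSeries.coeff (R := ℚ) j b
            * (PowerSeries.coeff (R := ℚ) q.1 (f ^ i) * PowerSeries.coeff (R := ℚ) q.2 (f ^ j)))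
        = ∑ j ∈ Finset.range (n+1), F (i, j) := by
      intro i _
      rw [Finset.sum_comm]
      refine Finset.sum_congr rfl fun j _ => ?_
      simp only [hF]
      rw [← Finset.mul_sum, ← PowerSeries.coeff_mul, ← pow_add]
    rw [Finset.sum_congr rfl step2]
    rw [← Finset.sum_product']
    refine (Finset.sum_subset (Finset.filter_subset _ _) ?_).symm
    intro p hp hp'
    apply hFzero
    simp only [hT', Finset.mem_filter, hp, true_and] at hp'
    omega
  rw [hL, hR]

end AuxLemmas

/-- If the inverse of (G(x^2), xG(x^2)) is (G(-x^2), xG(-x^2)), then the inverse of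
(G(x^2)^2, xG(x^2)) is (G(-x^2)^2, xG(-x^2)). -/
theorem quasi_involution_square (G : ℚ⟦X⟧)
    (hG0 : PowerSeries.constantCoeff (R := ℚ) G = 1)
    (h1 : rmul (comp G (X ^ 2), X * comp G (X ^ 2)) (comp G (-X ^ 2), X * comp G (-X ^ 2)) = (1, X))
    (h2 : rmul (comp G (-X ^ 2), X * comp G (-X ^ 2)) (comp G (X ^ 2), X * comp G (X ^ 2)) = (1, X)) :
    rmul (comp G (X ^ 2) ^ 2, X * comp G (X ^ 2)) (comp G (-X ^ 2) ^ 2, X * comp G (-X ^ 2)) = (1, X) ∧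
    rmul (comp G (-X ^ 2) ^ 2, X * comp G (-X ^ 2)) (comp G (X ^ 2) ^ 2, X * comp G (X ^ 2)) = (1, X) := by
  have hc : ∀ u : ℚ⟦X⟧, PowerSeries.constantCoeff (R := ℚ) (X * u) = 0 := by
    intro u; simp
  have key : ∀ g h : ℚ⟦X⟧,
      rmul (g, X * g) (h, X * h) = (1, X) →
      rmul (g ^ 2, X * g) (h ^ 2, X * h) = (1, X) := by
    intro g h hgh
    have e1 : g * comp h (X * g) = 1 := congrArg Prod.fst hgh
    have e2 : comp (X * h) (X * g) = X := congrArg Prod.snd hgh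
    have hsq : comp (h ^ 2) (X * g) = comp h (X * g) ^ 2 := by
      rw [sq, sq, comp_mul (hc g)]
    simp only [rmul, hsq, e2, Prod.mk.injEq, and_true]
    calc g ^ 2 * comp h (X * g) ^ 2 = (g * comp h (X * g)) ^ 2 := by ring
      _ = 1 := by rw [e1]; ring
  exact ⟨key _ _ h1, key _ _ h2⟩
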